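/- The symmetric tridiagonal (K+1)×(K+1) matrix -Y with diagonal entries (2 + 1/α, 2, ..., 2, 2 + 1/α) and off-diagonal entries -√2 in positions (1,2),(2,1),(K,K+1),(K+1,K) and -1 elsewhere on the sub/super diagonal is positive definite for any α > 0. -/

import Mathlib

open Matrix

/-- The (K+1)×(K+1) symmetric tridiagonal matrix -Y: diagonal entries
(2 + 1/α, 2, ..., 2, 2 + 1/α), off-diagonal entries -√2 at the two corner
positions and -1 elsewhere on the sub/super diagonal. -/
noncomputable def negY (K : ℕ) (α : ℝ) : Matrix (Fin (K + 1)) (Fin (K + 1)) ℝ :=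
  Matrix.of fun i j =>
    if (i : ℕ) = (j : ℕ) then
      (if (i : ℕ) = 0 ∨ (i : ℕ) = K then 2 + 1 / α else 2)
    else if (i : ℕ) + 1 = (j : ℕ) ∨ (j : ℕ) + 1 = (i : ℕ) then
      (if (i : ℕ) = 0 ∨ (j : ℕ) = 0 ∨ (i : ℕ) = K ∨ (j : ℕ) = K then -Real.sqrt 2 else -1)
    else 0

private noncomputable def Df (K : ℕ) (α : ℝ) : ℕ → ℝ :=
  fun n => if n = 0 ∨ n = K then 2 + 1 / α else 2

private noncomputable def Of (K : ℕ) : ℕ → ℝ :=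
  fun n => if n = 0 ∨ n + 1 = K ∨ n = K then -Real.sqrt 2 else -1

private noncomputable def extv (K : ℕ) (x : Fin (K + 1) → ℝ) : ℕ → ℝ :=
  fun n => if h : n < K + 1 then x ⟨n, h⟩ else 0

private lemma tri_sum (d o y : ℕ → ℝ) (N : ℕ) :
    ∑ n ∈ Finset.range N, ∑ m ∈ Finset.range N,
      y n * ((if n = m then d n else if n + 1 = m then o n else if m + 1 = n then o m else 0) * y m)
    = ∑ n ∈ Finset.range N, d n * y n ^ 2
      + 2 * ∑ n ∈ Finset.range (N - 1), o n * (y n * y (n + 1)) := by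
  induction N with
  | zero => simp
  | succ N ih =>
    rcases Nat.eq_zero_or_pos N with rfl | hN
    · simp [Finset.sum_range_one]; ring
    obtain ⟨M, rfl⟩ : ∃ M, N = M + 1 := ⟨N - 1, by omega⟩
    rw [Finset.sum_range_succ]
    have hg : ∀ n ∈ Finset.range (M + 1),
        (∑ m ∈ Finset.range (M + 1 + 1),
          y n * ((if n = m then d n else if n + 1 = m then o n else if m + 1 = n then o m else 0) * y m))
        = (∑ m ∈ Finset.range (M + 1),
          y n * ((if n = m then d n else if n + 1 = m then o n else if m + 1 = n then o m else 0) * y m))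
          + (if n = M then o n * (y n * y (M + 1)) else 0) := by
      intro n hn
      simp only [Finset.mem_range] at hn
      rw [Finset.sum_range_succ]
      congr 1
      by_cases h : n = M
      · subst h
        rw [if_pos rfl, if_neg (by omega), if_pos rfl]
        ring
      · rw [if_neg h, if_neg (by omega), if_neg (by omega), if_neg (by omega)]
        ring
    rw [Finset.sum_congr rfl hg, Finset.sum_add_distrib, ih]
    have h1 : ∑ n ∈ Finset.range (M + 1), (if n = M then o n * (y n * y (M + 1)) else 0)
        = o M * (y M * y (M + 1)) := by
      rw [Finset.sum_ite_eq' (Finset.range (M + 1)) M]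
      simp
    rw [h1]
    have h2 : (∑ m ∈ Finset.range (M + 1 + 1),
          y (M + 1) * ((if M + 1 = m then d (M + 1) else if M + 1 + 1 = m then o (M + 1)
            else if m + 1 = M + 1 then o m else 0) * y m))
        = o M * (y M * y (M + 1)) + d (M + 1) * y (M + 1) ^ 2 := by
      rw [Finset.sum_range_succ, if_pos rfl]
      have h3 : ∀ m ∈ Finset.range (M + 1),
          y (M + 1) * ((if M + 1 = m then d (M + 1) else if M + 1 + 1 = m then o (M + 1)
            else if m + 1 = M + 1 then o m else 0) * y m)
          = (if m = M then o m * (y m * y (M + 1)) else 0) := by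
        intro m hm
        simp only [Finset.mem_range] at hm
        by_cases h : m = M
        · subst h
          rw [if_neg (by omega), if_neg (by omega), if_pos rfl, if_pos rfl]
          ring
        · rw [if_neg (by omega), if_neg (by omega), if_neg (by omega), if_neg h]
          ring
      rw [Finset.sum_congr rfl h3, Finset.sum_ite_eq' (Finset.range (M + 1)) M]
      simp
      ring
    rw [h2]
    rw [Finset.sum_range_succ (fun n => d n * y n ^ 2) (M + 1)]
    simp only [Nat.add_sub_cancel]
    rw [Finset.sum_range_succ (fun n => o n * (y n * y (n + 1))) M]
    ring

private lemma hentry (K : ℕ) (α : ℝ) (i j : Fin (K + 1)) :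
    negY K α i j
    = (if (i : ℕ) = (j : ℕ) then Df K α i
        else if (i : ℕ) + 1 = (j : ℕ) then Of K i
        else if (j : ℕ) + 1 = (i : ℕ) then Of K j else 0) := by
  simp only [negY, Matrix.of_apply, Df, Of]
  split_ifs <;> first | rfl | omega

private lemma quad_eq (K : ℕ) (α : ℝ) (x : Fin (K + 1) → ℝ) :
    star x ⬝ᵥ (negY K α) *ᵥ x
    = ∑ n ∈ Finset.range (K + 1), Df K α n * extv K x n ^ 2
      + 2 * ∑ n ∈ Finset.range K, Of K n * (extv K x n * extv K x (n + 1)) := by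
  have hxy : ∀ i : Fin (K + 1), x i = extv K x i := by
    intro i
    simp [extv, i.isLt]
  have := tri_sum (Df K α) (Of K) (extv K x) (K + 1)
  rw [Nat.add_sub_cancel] at this
  rw [← this]
  simp only [dotProduct, Matrix.mulVec, Pi.star_apply, star_trivial]
  rw [← Fin.sum_univ_eq_sum_range (fun n => ∑ m ∈ Finset.range (K + 1),
    extv K x n * ((if n = m then Df K α n else if n + 1 = m then Of K n
      else if m + 1 = n then Of K m else 0) * extv K x m)) (K + 1)]
  refine Finset.sum_congr rfl fun i _ => ?_
  rw [← Fin.sum_univ_eq_sum_range (fun m => extv K x (i : ℕ) * ((if (i : ℕ) = m then Df K α i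
      else if (i : ℕ) + 1 = m then Of K i else if m + 1 = (i : ℕ) then Of K m else 0)
      * extv K x m)) (K + 1)]
  rw [Finset.mul_sum]
  refine Finset.sum_congr rfl fun j _ => ?_
  rw [← hxy i, ← hxy j, hentry]

/-- The matrix -Y is positive definite for any α > 0. -/
theorem negY_posDef (K : ℕ) (hK : 2 ≤ K) (α : ℝ) (hα : 0 < α) :
    (negY K α).PosDef := by
  obtain ⟨M, rfl⟩ : ∃ M, K = M + 2 := ⟨K - 2, by omega⟩
  rw [Matrix.posDef_iff_dotProduct_mulVec]
  constructor
  · ext i j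
    simp only [Matrix.conjTranspose_apply, negY, Matrix.of_apply, star_trivial]
    split_ifs <;> first | rfl | omega
  intro x hx
  set y : ℕ → ℝ := extv (M + 2) x with hy
  have hs2 : Real.sqrt 2 ^ 2 = 2 := Real.sq_sqrt (by norm_num)
  have hQ : star x ⬝ᵥ (negY (M + 2) α) *ᵥ x
      = 1 / α * y 0 ^ 2 + 1 / α * y (M + 2) ^ 2
        + 2 * (y 0 - Real.sqrt 2 / 2 * y 1) ^ 2
        + 2 * (y (M + 2) - Real.sqrt 2 / 2 * y (M + 1)) ^ 2
        + ∑ n ∈ Finset.range M, (y (n + 1) - y (n + 2)) ^ 2 := by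
    rw [quad_eq]
    have hd : ∑ n ∈ Finset.range (M + 2 + 1), Df (M + 2) α n * y n ^ 2
        = (2 + 1 / α) * y 0 ^ 2 + (2 + 1 / α) * y (M + 2) ^ 2
          + 2 * ∑ n ∈ Finset.range (M + 1), y (n + 1) ^ 2 := by
      rw [Finset.sum_range_succ, Finset.sum_range_succ']
      have hmid : ∀ n ∈ Finset.range (M + 1), Df (M + 2) α (n + 1) * y (n + 1) ^ 2
          = 2 * y (n + 1) ^ 2 := by
        intro n hn
        simp only [Finset.mem_range] at hn
        simp only [Df]
        rw [if_neg (by omega)]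
      rw [Finset.sum_congr rfl hmid, ← Finset.mul_sum]
      simp only [Df, true_or, or_true, if_true]
      ring
    have ho : ∑ n ∈ Finset.range (M + 2), Of (M + 2) n * (y n * y (n + 1))
        = -Real.sqrt 2 * (y 0 * y 1) + -Real.sqrt 2 * (y (M + 1) * y (M + 2))
          - ∑ n ∈ Finset.range M, y (n + 1) * y (n + 2) := by
      rw [Finset.sum_range_succ, Finset.sum_range_succ']
      have hmid : ∀ n ∈ Finset.range M, Of (M + 2) (n + 1) * (y (n + 1) * y (n + 1 + 1))
          = -(y (n + 1) * y (n + 2)) := by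
        intro n hn
        simp only [Finset.mem_range] at hn
        simp only [Of]
        rw [if_neg (by omega)]
        ring
      rw [Finset.sum_congr rfl hmid, Finset.sum_neg_distrib]
      simp only [Of, true_or, or_true, if_true]
      ring
    rw [hd, ho]
    have e1 : ∑ n ∈ Finset.range M, (y (n + 1) - y (n + 2)) ^ 2
        = ∑ n ∈ Finset.range M, y (n + 1) ^ 2 + ∑ n ∈ Finset.range M, y (n + 2) ^ 2
          - 2 * ∑ n ∈ Finset.range M, y (n + 1) * y (n + 2) := by
      rw [← Finset.sum_add_distrib, Finset.mul_sum, ← Finset.sum_sub_distrib]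
      exact Finset.sum_congr rfl fun n _ => by ring
    have e2 : ∑ n ∈ Finset.range (M + 1), y (n + 1) ^ 2
        = ∑ n ∈ Finset.range M, y (n + 1) ^ 2 + y (M + 1) ^ 2 :=
      Finset.sum_range_succ _ M
    have e3 : ∑ n ∈ Finset.range (M + 1), y (n + 1) ^ 2
        = ∑ n ∈ Finset.range M, y (n + 2) ^ 2 + y 1 ^ 2 :=
      Finset.sum_range_succ' (fun n => y (n + 1) ^ 2) M
    linear_combination e2 + e3 - e1 - (y 1 ^ 2 + y (M + 1) ^ 2) / 2 * hs2
  rw [hQ]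
  have hα1 : (0:ℝ) ≤ 1 / α := by positivity
  have n1 : (0:ℝ) ≤ 1 / α * y 0 ^ 2 := mul_nonneg hα1 (sq_nonneg _)
  have n2 : (0:ℝ) ≤ 1 / α * y (M + 2) ^ 2 := mul_nonneg hα1 (sq_nonneg _)
  have n3 : (0:ℝ) ≤ 2 * (y 0 - Real.sqrt 2 / 2 * y 1) ^ 2 := by positivity
  have n4 : (0:ℝ) ≤ 2 * (y (M + 2) - Real.sqrt 2 / 2 * y (M + 1)) ^ 2 := by positivity
  have n5 : (0:ℝ) ≤ ∑ n ∈ Finset.range M, (y (n + 1) - y (n + 2)) ^ 2 :=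
    Finset.sum_nonneg fun n _ => sq_nonneg _
  rcases lt_or_eq_of_le (by linarith :
      (0:ℝ) ≤ 1 / α * y 0 ^ 2 + 1 / α * y (M + 2) ^ 2
        + 2 * (y 0 - Real.sqrt 2 / 2 * y 1) ^ 2
        + 2 * (y (M + 2) - Real.sqrt 2 / 2 * y (M + 1)) ^ 2
        + ∑ n ∈ Finset.range M, (y (n + 1) - y (n + 2)) ^ 2) with h | heq
  · exact h
  exfalso
  have t1 : 1 / α * y 0 ^ 2 = 0 := by linarith
  have t2 : 1 / α * y (M + 2) ^ 2 = 0 := by linarith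
  have t3 : 2 * (y 0 - Real.sqrt 2 / 2 * y 1) ^ 2 = 0 := by linarith
  have t4 : 2 * (y (M + 2) - Real.sqrt 2 / 2 * y (M + 1)) ^ 2 = 0 := by linarith
  have t5 : ∑ n ∈ Finset.range M, (y (n + 1) - y (n + 2)) ^ 2 = 0 := by linarith
  have hαne : (1:ℝ) / α ≠ 0 := by positivity
  have hsne : Real.sqrt 2 / 2 ≠ 0 := by positivity
  have hy0 : y 0 = 0 := by
    have := (mul_eq_zero.mp t1).resolve_left hαne
    exact pow_eq_zero_iff two_ne_zero |>.mp this
  have hyK : y (M + 2) = 0 := by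
    have := (mul_eq_zero.mp t2).resolve_left hαne
    exact pow_eq_zero_iff two_ne_zero |>.mp this
  have hy1 : y 1 = 0 := by
    have h3 : (y 0 - Real.sqrt 2 / 2 * y 1) ^ 2 = 0 := by linarith
    have h3' := pow_eq_zero_iff two_ne_zero |>.mp h3
    have : Real.sqrt 2 / 2 * y 1 = 0 := by linarith [hy0]
    exact (mul_eq_zero.mp this).resolve_left hsne
  have hyM1 : y (M + 1) = 0 := by
    have h4 : (y (M + 2) - Real.sqrt 2 / 2 * y (M + 1)) ^ 2 = 0 := by linarith
    have h4' := pow_eq_zero_iff two_ne_zero |>.mp h4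
    have : Real.sqrt 2 / 2 * y (M + 1) = 0 := by linarith [hyK]
    exact (mul_eq_zero.mp this).resolve_left hsne
  have h5 := (Finset.sum_eq_zero_iff_of_nonneg fun n _ => sq_nonneg _).mp t5
  have hchain : ∀ n, n < M → y (n + 2) = y (n + 1) := by
    intro n hn
    have := h5 n (Finset.mem_range.mpr hn)
    have := pow_eq_zero_iff two_ne_zero |>.mp this
    linarith
  have hall : ∀ n, n ≤ M → y (n + 1) = 0 := by
    intro n
    induction n with
    | zero => intro _; exact hy1
    | succ k ihk =>
      intro hk
      rw [hchain k (by omega)]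
      exact ihk (by omega)
  apply hx
  funext i
  have hxi : x i = y (i : ℕ) := by simp [hy, extv, i.isLt]
  have hlt : (i : ℕ) < M + 2 + 1 := i.isLt
  show x i = 0
  rw [hxi]
  rcases Nat.eq_zero_or_pos (i : ℕ) with h0 | hpos
  · rw [h0]; exact hy0
  rcases eq_or_lt_of_le (by omega : (i : ℕ) ≤ M + 2) with hKK | hlt'
  · rw [hKK]; exact hyK
  obtain ⟨k, hk, hik⟩ : ∃ k, k ≤ M ∧ (i : ℕ) = k + 1 := ⟨(i : ℕ) - 1, by omega, by omega⟩
  rw [hik]; exact hall k hk
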